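/- If u ∈ L²(V,ν_G) ∩ L^p(V,ν_G) and Δ_p^G u ∈ L¹(V,ν_G), then ∑_{x∈V} Δ_p^G u(x) d_x = 0 (mass conservation for the p-Laplacian). -/

import Mathlib

open Real

/-- (s+t)^q ≤ 2^q (s^q + t^q) for nonnegative s,t and q ≥ 0. -/
lemma aux_rpow_add_le {s t q : ℝ} (hs : 0 ≤ s) (ht : 0 ≤ t) (hq : 0 ≤ q) :
    (s + t) ^ q ≤ 2 ^ q * (s ^ q + t ^ q) := by
  have hmax : s + t ≤ 2 * max s t := by
    rcases max_cases s t with ⟨h, h'⟩ | ⟨h, h'⟩ <;> rw [h] <;> linarith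
  have h1 : (s + t) ^ q ≤ (2 * max s t) ^ q :=
    Real.rpow_le_rpow (by linarith) hmax hq
  have h2 : (2 * max s t) ^ q = 2 ^ q * (max s t) ^ q :=
    Real.mul_rpow (by norm_num) (le_max_of_le_left hs)
  have h3 : (max s t) ^ q ≤ s ^ q + t ^ q := by
    rcases max_cases s t with ⟨h, _⟩ | ⟨h, _⟩ <;> rw [h]
    · nlinarith [Real.rpow_nonneg ht q]
    · nlinarith [Real.rpow_nonneg hs q]
  calc (s + t) ^ q ≤ 2 ^ q * (max s t) ^ q := by rw [← h2]; exact h1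
    _ ≤ 2 ^ q * (s ^ q + t ^ q) := by
        have : (0:ℝ) ≤ (2:ℝ) ^ q := Real.rpow_nonneg (by norm_num) q
        nlinarith

/-- |a|^(p-2) * a has absolute value |a|^(p-1). -/
lemma aux_abs_pow {a p : ℝ} (hp : 3 ≤ p) :
    |(|a| ^ (p - 2) * a)| = |a| ^ (p - 1) := by
  rcases eq_or_ne a 0 with rfl | ha
  · simp [Real.zero_rpow (by linarith : p - 2 ≠ 0), Real.zero_rpow (by linarith : p - 1 ≠ 0)]
  · rw [abs_mul, abs_of_nonneg (Real.rpow_nonneg (abs_nonneg a) _),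
      ← Real.rpow_add_one (abs_ne_zero.mpr ha)]
    ring_nf

/-- Mass conservation for the graph p-Laplacian: ∑_x Δ_p^G u(x) d_x = 0. -/
theorem stmt2 {V : Type*} [Countable V] (w : V → V → ℝ) (d : V → ℝ)
    (hw : ∀ x y, 0 ≤ w x y) (hsymm : ∀ x y, w x y = w y x)
    (hd : ∀ x, d x = ∑' y, w x y) (hdpos : ∀ x, 0 < d x)
    (p : ℝ) (hp : 3 ≤ p) (u : V → ℝ)
    (hu2 : Summable fun x => |u x| ^ (2 : ℝ) * d x)
    (hup : Summable fun x => |u x| ^ p * d x)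
    (Δ : V → ℝ)
    (hΔ : ∀ x, Δ x = (1 / d x) * ∑' y, |u y - u x| ^ (p - 2) * (u y - u x) * w x y)
    (hΔ1 : Summable fun x => |Δ x| * d x) :
    ∑' x, Δ x * d x = 0 := by
  have hq : (0:ℝ) ≤ p - 1 := by linarith
  -- each row of w is summable
  have hws : ∀ x, Summable (fun y => w x y) := by
    intro x
    by_contra h
    have h0 := tsum_eq_zero_of_not_summable h
    have := hdpos x
    rw [hd x, h0] at this
    exact lt_irrefl _ this
  -- interpolation: |u|^(p-1) * d is summable
  have hg : Summable (fun x => |u x| ^ (p - 1) * d x) := by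
    have hsum : Summable (fun x => (|u x| ^ (2:ℝ) + |u x| ^ p) * d x) := by
      have := hu2.add hup
      apply this.congr
      intro x; ring
    apply Summable.of_nonneg_of_le (fun x => mul_nonneg (Real.rpow_nonneg (abs_nonneg _) _) (hdpos x).le) (fun x => ?_) hsum
    apply mul_le_mul_of_nonneg_right _ (hdpos x).le
    rcases le_or_gt (|u x|) 1 with h1 | h1
    · rcases eq_or_ne (|u x|) 0 with h0 | h0
      · rw [h0, Real.zero_rpow (by linarith : p - 1 ≠ 0)]
        positivity
      · have hpos : 0 < |u x| := lt_of_le_of_ne (abs_nonneg _) (Ne.symm h0)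
        have : |u x| ^ (p - 1) ≤ |u x| ^ (2:ℝ) :=
          Real.rpow_le_rpow_of_exponent_ge hpos h1 (by linarith)
        have h2 : (0:ℝ) ≤ |u x| ^ p := Real.rpow_nonneg (abs_nonneg _) _
        linarith
    · have : |u x| ^ (p - 1) ≤ |u x| ^ p :=
        Real.rpow_le_rpow_of_exponent_le h1.le (by linarith)
      have h2 : (0:ℝ) ≤ |u x| ^ (2:ℝ) := Real.rpow_nonneg (abs_nonneg _) _
      linarith
  -- the double family
  set F : V × V → ℝ := fun z => |u z.2 - u z.1| ^ (p - 2) * (u z.2 - u z.1) * w z.1 z.2 with hFdef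
  have hanti : ∀ x y : V, F (y, x) = -F (x, y) := by
    intro x y
    simp only [hFdef]
    rw [abs_sub_comm (u x) (u y), hsymm y x]
    ring
  -- summability of (x,y) ↦ |u x|^(p-1) * w x y
  have hprod1 : Summable (fun z : V × V => |u z.1| ^ (p - 1) * w z.1 z.2) := by
    rw [summable_prod_of_nonneg (fun z => mul_nonneg (Real.rpow_nonneg (abs_nonneg _) _) (hw _ _))]
    constructor
    · intro x
      simpa using (hws x).mul_left (|u x| ^ (p - 1))
    · apply hg.congr
      intro x
      simp only
      rw [tsum_mul_left, ← hd x]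
  have hprod2 : Summable (fun z : V × V => |u z.2| ^ (p - 1) * w z.1 z.2) := by
    have := (Equiv.prodComm V V).summable_iff.mpr hprod1
    apply this.congr
    intro z
    simp only [Function.comp, Equiv.prodComm_apply, Prod.fst_swap, Prod.snd_swap]
    rw [hsymm z.2 z.1]
  -- summability of |F|
  have hFabs : Summable (fun z : V × V => |F z|) := by
    apply Summable.of_nonneg_of_le (fun z => abs_nonneg _) (fun z => ?_)
      (((hprod1.add hprod2).mul_left ((2:ℝ) ^ (p - 1))))
    have h1 : |F z| = |u z.2 - u z.1| ^ (p - 1) * w z.1 z.2 := by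
      simp only [hFdef]
      rw [abs_mul, abs_of_nonneg (hw z.1 z.2), aux_abs_pow hp]
    rw [h1]
    have h2 : |u z.2 - u z.1| ^ (p - 1) ≤ 2 ^ (p - 1) * (|u z.1| ^ (p - 1) + |u z.2| ^ (p - 1)) := by
      have hle : |u z.2 - u z.1| ≤ |u z.1| + |u z.2| := by
        rw [abs_sub_comm]; exact abs_sub (u z.1) (u z.2)
      calc |u z.2 - u z.1| ^ (p - 1) ≤ (|u z.1| + |u z.2|) ^ (p - 1) :=
            Real.rpow_le_rpow (abs_nonneg _) hle hq
        _ ≤ 2 ^ (p - 1) * (|u z.1| ^ (p - 1) + |u z.2| ^ (p - 1)) :=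
            aux_rpow_add_le (abs_nonneg _) (abs_nonneg _) hq
    calc |u z.2 - u z.1| ^ (p - 1) * w z.1 z.2
        ≤ (2 ^ (p - 1) * (|u z.1| ^ (p - 1) + |u z.2| ^ (p - 1))) * w z.1 z.2 :=
          mul_le_mul_of_nonneg_right h2 (hw z.1 z.2)
      _ = 2 ^ (p - 1) * (|u z.1| ^ (p - 1) * w z.1 z.2 + |u z.2| ^ (p - 1) * w z.1 z.2) := by ring
  have hFsum : Summable F := hFabs.of_abs
  -- Δ x * d x = row sum of F
  have key : ∀ x, Δ x * d x = ∑' y, F (x, y) := by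
    intro x
    rw [hΔ x]
    have hdne : d x ≠ 0 := (hdpos x).ne'
    field_simp
    exact tsum_congr fun y => by simp only [hFdef]; ring
  -- total sum of F is zero by antisymmetry
  have hzero : ∑' z, F z = 0 := by
    have h1 : ∑' z : V × V, F ((Equiv.prodComm V V) z) = ∑' z, F z :=
      (Equiv.prodComm V V).tsum_eq F
    have h2 : ∑' z : V × V, F ((Equiv.prodComm V V) z) = ∑' z : V × V, -F z := by
      apply tsum_congr
      intro z
      rw [Equiv.prodComm_apply]
      exact hanti z.1 z.2
    rw [h2, tsum_neg] at h1
    linarith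
  calc ∑' x, Δ x * d x = ∑' x, ∑' y, F (x, y) := tsum_congr key
    _ = ∑' z, F z := (Summable.tsum_prod hFsum).symm
    _ = 0 := hzero
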